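/- Let L₁, L₂ be non-proportional primitive integral binary linear forms and Q a primitive integral binary quadratic form irreducible over ℚ. Define ρ*(d₁,d₂,d₃) as the number of x ∈ [0, d₁d₂d₃)² with d_i | L_i(x), d₃ | Q(x) and gcd(x₁,x₂,d₁d₂d₃) = 1. Then for any prime p and exponents with ν₃ ≤ max{ν₁,ν₂}, one has ρ*(p^{ν₁},p^{ν₂},p^{ν₃}) ≤ φ(p^{ν₁+ν₂+ν₃}) · p^{ν₃ + min{ν₁, ν₂, v_p(Δ₁₂)}}, where Δ₁₂ = Res(L₁,L₂). -/

import Mathlib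

/-- `ρ*(d₁,d₂,d₃)`: number of `x ∈ [0, d₁d₂d₃)²` with `dᵢ ∣ Lᵢ(x)`, `d₃ ∣ Q(x)` and
`gcd(x₁, x₂, d₁d₂d₃) = 1`, for `L₁ = a₁x₁+b₁x₂`, `L₂ = a₂x₁+b₂x₂`,
`Q = a₃x₁² + b₃x₂² + c₃x₁x₂`. -/
def rhoStar (a₁ b₁ a₂ b₂ a₃ b₃ c₃ : ℤ) (d₁ d₂ d₃ : ℕ) : ℕ :=
  ((Finset.range (d₁ * d₂ * d₃) ×ˢ Finset.range (d₁ * d₂ * d₃)).filter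
    (fun x => (d₁ : ℤ) ∣ a₁ * x.1 + b₁ * x.2 ∧ (d₂ : ℤ) ∣ a₂ * x.1 + b₂ * x.2 ∧
      (d₃ : ℤ) ∣ a₃ * x.1 ^ 2 + b₃ * x.2 ^ 2 + c₃ * x.1 * x.2 ∧
      Nat.gcd (Nat.gcd x.1 x.2) (d₁ * d₂ * d₃) = 1)).card

open Finset in
/-- Core counting lemma: if `p ∤ a`, the number of `x ∈ [0,p^s)²` with
`p^ν ∣ a x₁ + b x₂` and `gcd(x₁,x₂,p^s) = 1` is at most `φ(p^s)·p^{s-ν}`. -/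
lemma rhoStar_core (p : ℕ) (hp : p.Prime) (a b : ℤ) (ha : ¬ (p : ℤ) ∣ a)
    (ν s : ℕ) (hν : 1 ≤ ν) (hνs : ν ≤ s) :
    ((range (p ^ s) ×ˢ range (p ^ s)).filter
      (fun x : ℕ × ℕ => ((p ^ ν : ℕ) : ℤ) ∣ a * x.1 + b * x.2 ∧
        Nat.gcd (Nat.gcd x.1 x.2) (p ^ s) = 1)).card
      ≤ Nat.totient (p ^ s) * p ^ (s - ν) := by
  classical
  have hppos : 0 < p := hp.pos
  have hpZ : Prime (p : ℤ) := Nat.prime_iff_prime_int.mp hp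
  have hcop : IsCoprime ((p : ℤ) ^ ν) a := ((hpZ.coprime_iff_not_dvd).mpr ha).pow_left
  have hcardT : (((range (p ^ s)).filter (fun y => ¬ p ∣ y)) ×ˢ
      range (p ^ (s - ν))).card = Nat.totient (p ^ s) * p ^ (s - ν) := by
    rw [card_product, card_range]
    congr 1
    have : (range (p ^ s)).filter (fun y => ¬ p ∣ y)
        = (range (p ^ s)).filter (p ^ s).Coprime := by
      apply filter_congr
      intro y _
      rw [Nat.coprime_pow_left_iff (by omega : 0 < s), hp.coprime_iff_not_dvd]
    rw [this]
    rfl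
  rw [← hcardT]
  apply Finset.card_le_card_of_injOn (fun x => (x.2, x.1 / p ^ ν))
  · intro x hx
    simp only [mem_coe, mem_filter, mem_product, mem_range] at hx
    obtain ⟨⟨hx1, hx2⟩, hdvd, hg⟩ := hx
    have hpx2 : ¬ p ∣ x.2 := by
      intro hp2
      have hp1 : (p : ℤ) ∣ ((p ^ ν : ℕ) : ℤ) := by
        exact_mod_cast dvd_pow_self p (by omega : ν ≠ 0)
      have h1 : (p : ℤ) ∣ a * x.1 + b * x.2 := dvd_trans hp1 hdvd
      have h2 : (p : ℤ) ∣ b * x.2 := Dvd.dvd.mul_left (by exact_mod_cast hp2) b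
      have h3 : (p : ℤ) ∣ a * x.1 := by
        have := dvd_sub h1 h2
        simpa using this
      have h4 : (p : ℤ) ∣ (x.1 : ℤ) := (hpZ.dvd_mul.mp h3).resolve_left ha
      have h5 : p ∣ x.1 := by exact_mod_cast h4
      have h6 : p ∣ Nat.gcd (Nat.gcd x.1 x.2) (p ^ s) :=
        Nat.dvd_gcd (Nat.dvd_gcd h5 hp2) (dvd_pow_self p (by omega : s ≠ 0))
      rw [hg] at h6
      exact hp.one_lt.ne' (Nat.dvd_one.mp h6)
    simp only [mem_coe, mem_product, mem_filter, mem_range]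
    refine ⟨⟨hx2, hpx2⟩, ?_⟩
    rw [Nat.div_lt_iff_lt_mul (pow_pos hppos ν), ← pow_add]
    rwa [Nat.sub_add_cancel hνs]
  · intro x hx y hy hxy
    simp only [mem_coe, mem_filter, mem_product, mem_range] at hx hy
    obtain ⟨⟨hx1, hx2⟩, hdx, hgx⟩ := hx
    obtain ⟨⟨hy1, hy2⟩, hdy, hgy⟩ := hy
    have h2 : x.2 = y.2 := by simpa using congrArg Prod.fst hxy
    have hdiv : x.1 / p ^ ν = y.1 / p ^ ν := by simpa using congrArg Prod.snd hxy
    have hsub : ((p ^ ν : ℕ) : ℤ) ∣ a * ((x.1 : ℤ) - y.1) := by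
      have := dvd_sub hdx hdy
      rw [h2] at this
      convert this using 1 <;> try rfl
      ring
    have hdvd1 : ((p : ℤ) ^ ν) ∣ ((x.1 : ℤ) - y.1) := by
      apply hcop.dvd_of_dvd_mul_left
      exact_mod_cast hsub
    have hmod : y.1 ≡ x.1 [MOD p ^ ν] := by
      rw [Nat.modEq_iff_dvd]
      exact_mod_cast hdvd1
    have hmod' : y.1 % p ^ ν = x.1 % p ^ ν := hmod
    have : x.1 = y.1 := by
      conv_lhs => rw [← Nat.div_add_mod x.1 (p ^ ν)]
      conv_rhs => rw [← Nat.div_add_mod y.1 (p ^ ν)]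
      rw [hdiv, ← hmod']
    exact Prod.ext this h2

open Finset in
/-- Same as `rhoStar_core`, but only assuming the form is primitive. -/
lemma rhoStar_key (p : ℕ) (hp : p.Prime) (a b : ℤ) (hab : Int.gcd a b = 1)
    (ν s : ℕ) (hν : 1 ≤ ν) (hνs : ν ≤ s) :
    ((range (p ^ s) ×ˢ range (p ^ s)).filter
      (fun x : ℕ × ℕ => ((p ^ ν : ℕ) : ℤ) ∣ a * x.1 + b * x.2 ∧
        Nat.gcd (Nat.gcd x.1 x.2) (p ^ s) = 1)).card
      ≤ Nat.totient (p ^ s) * p ^ (s - ν) := by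
  classical
  by_cases ha : (p : ℤ) ∣ a
  · -- then p ∤ b; swap the roles of the coordinates
    have hb : ¬ (p : ℤ) ∣ b := by
      intro hbdvd
      have h := Int.dvd_gcd ha hbdvd
      rw [hab] at h
      have h' : p ∣ 1 := by exact_mod_cast h
      exact hp.one_lt.ne' (Nat.dvd_one.mp h')
    have hswap := rhoStar_core p hp b a hb ν s hν hνs
    refine le_trans (le_of_eq ?_) hswap
    apply Finset.card_nbij (fun x => (x.2, x.1))
    · intro x hx
      simp only [mem_coe, mem_filter, mem_product, mem_range] at hx ⊢
      refine ⟨⟨hx.1.2, hx.1.1⟩, ?_, ?_⟩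
      · convert hx.2.1 using 1; ring
      · rw [Nat.gcd_comm x.2 x.1]; exact hx.2.2
    · intro x hx y hy hxy
      simp only at hxy
      exact Prod.ext (congrArg Prod.snd hxy) (congrArg Prod.fst hxy)
    · intro y hy
      refine ⟨(y.2, y.1), ?_, rfl⟩
      simp only [mem_coe, mem_filter, mem_product, mem_range] at hy ⊢
      refine ⟨⟨hy.1.2, hy.1.1⟩, ?_, ?_⟩
      · convert hy.2.1 using 1; ring
      · rw [Nat.gcd_comm y.2 y.1]; exact hy.2.2
  · exact rhoStar_core p hp a b ha ν s hν hνs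

theorem stmt7 (a₁ b₁ a₂ b₂ a₃ b₃ c₃ : ℤ)
    (h1prim : Int.gcd a₁ b₁ = 1) (h2prim : Int.gcd a₂ b₂ = 1)
    (hprop : a₁ * b₂ - a₂ * b₁ ≠ 0)
    (hQprim : Int.gcd (Int.gcd a₃ b₃) c₃ = 1)
    (hirr : ¬ IsSquare (c₃ ^ 2 - 4 * a₃ * b₃))
    (p : ℕ) (hp : p.Prime) (ν₁ ν₂ ν₃ : ℕ) (hν : ν₃ ≤ max ν₁ ν₂) :
    rhoStar a₁ b₁ a₂ b₂ a₃ b₃ c₃ (p ^ ν₁) (p ^ ν₂) (p ^ ν₃) ≤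
      Nat.totient (p ^ (ν₁ + ν₂ + ν₃)) *
        p ^ (ν₃ + min (min ν₁ ν₂) (padicValInt p (a₁ * b₂ - a₂ * b₁))) := by
  classical
  haveI : Fact p.Prime := ⟨hp⟩
  set Δ : ℤ := a₁ * b₂ - a₂ * b₁ with hΔ
  set δ : ℕ := padicValInt p Δ with hδdef
  set s : ℕ := ν₁ + ν₂ + ν₃ with hs
  have hNs : p ^ ν₁ * p ^ ν₂ * p ^ ν₃ = p ^ s := by rw [hs, pow_add, pow_add]
  -- trivial case: all exponents zero
  by_cases hs0 : s = 0
  · have h1 : ν₁ = 0 := by omega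
    have h2 : ν₂ = 0 := by omega
    have h3 : ν₃ = 0 := by omega
    subst h1; subst h2; subst h3
    have hL : rhoStar a₁ b₁ a₂ b₂ a₃ b₃ c₃ (p ^ 0) (p ^ 0) (p ^ 0) ≤ 1 := by
      rw [rhoStar]
      refine le_trans (Finset.card_le_card (Finset.filter_subset _ _)) ?_
      simp
    have hR : 0 < Nat.totient (p ^ s) * p ^ (0 + min (min 0 0) δ) :=
      Nat.mul_pos (Nat.totient_pos.mpr (pow_pos hp.pos s)) (pow_pos hp.pos _)
    omega
  have hs1 : 1 ≤ s := by omega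
  rw [rhoStar, hNs]
  set m : ℕ := min ν₁ ν₂ with hm
  by_cases hcase : δ < m
  · -- here there are no solutions at all
    have hzero : ((Finset.range (p ^ s) ×ˢ Finset.range (p ^ s)).filter
        (fun x : ℕ × ℕ => ((p ^ ν₁ : ℕ) : ℤ) ∣ a₁ * x.1 + b₁ * x.2 ∧
          ((p ^ ν₂ : ℕ) : ℤ) ∣ a₂ * x.1 + b₂ * x.2 ∧
          ((p ^ ν₃ : ℕ) : ℤ) ∣ a₃ * x.1 ^ 2 + b₃ * x.2 ^ 2 + c₃ * x.1 * x.2 ∧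
          Nat.gcd (Nat.gcd x.1 x.2) (p ^ s) = 1)) = ∅ := by
      apply Finset.filter_false_of_mem
      intro x hx
      rintro ⟨hd1, hd2, -, hg⟩
      -- derive p^m ∣ Δ * x.1 and p^m ∣ Δ * x.2
      have hm1 : ((p : ℤ) ^ m) ∣ a₁ * x.1 + b₁ * x.2 :=
        dvd_trans (pow_dvd_pow _ (Nat.min_le_left _ _)) (by exact_mod_cast hd1)
      have hm2 : ((p : ℤ) ^ m) ∣ a₂ * x.1 + b₂ * x.2 :=
        dvd_trans (pow_dvd_pow _ (Nat.min_le_right _ _)) (by exact_mod_cast hd2)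
      have hdx1 : ((p : ℤ) ^ m) ∣ Δ * x.1 := by
        have := dvd_sub (hm1.mul_left b₂) (hm2.mul_left b₁)
        convert this using 1 <;> try rfl
        rw [hΔ]; ring
      have hdx2 : ((p : ℤ) ^ m) ∣ Δ * x.2 := by
        have := dvd_sub (hm2.mul_left a₁) (hm1.mul_left a₂)
        convert this using 1 <;> try rfl
        rw [hΔ]; ring
      -- from v_p(Δ) = δ < m conclude p ∣ x.1 and p ∣ x.2
      have key : ∀ n : ℕ, ((p : ℤ) ^ m) ∣ Δ * n → p ∣ n := by
        intro n hdn
        by_cases hn : n = 0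
        · simp [hn]
        have hnat : p ^ m ∣ Δ.natAbs * n := by
          have : ((p : ℤ) ^ m).natAbs ∣ (Δ * n).natAbs := Int.natAbs_dvd_natAbs.mpr hdn
          simpa [Int.natAbs_mul, Int.natAbs_pow] using this
        have hΔ0 : Δ.natAbs ≠ 0 := by
          simp [Int.natAbs_ne_zero]; exact hprop
        have hval : m ≤ padicValNat p (Δ.natAbs * n) :=
          ((padicValNat_dvd_iff m (Δ.natAbs * n)).mp hnat).resolve_left
            (mul_ne_zero hΔ0 hn)
        rw [padicValNat.mul hΔ0 hn] at hval
        have hδeq : padicValNat p Δ.natAbs = δ := rfl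
        have hvn : 1 ≤ padicValNat p n := by omega
        have := (padicValNat_dvd_iff 1 n).mpr (Or.inr hvn)
        simpa using this
      have h1 : p ∣ x.1 := key x.1 hdx1
      have h2 : p ∣ x.2 := key x.2 hdx2
      have h6 : p ∣ Nat.gcd (Nat.gcd x.1 x.2) (p ^ s) :=
        Nat.dvd_gcd (Nat.dvd_gcd h1 h2) (dvd_pow_self p (by omega : s ≠ 0))
      rw [hg] at h6
      exact hp.one_lt.ne' (Nat.dvd_one.mp h6)
    rw [hzero]
    simp
  · -- min (min ν₁ ν₂) δ = m; drop all conditions except the one for the larger νᵢ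
    push_neg at hcase
    have hmin : min m δ = m := min_eq_left hcase
    rw [hmin]
    -- wlog: use the form with the larger exponent
    rcases le_total ν₂ ν₁ with hle | hle
    · -- use L₁ at level ν₁; note ν₁ ≥ 1 since s ≥ 1 and ν₁ = max
      have hν₁ : 1 ≤ ν₁ := by
        rcases Nat.eq_zero_or_pos ν₁ with h0 | h0
        · exfalso; omega
        · exact h0
      have hsub : s - ν₁ = ν₃ + m := by omega
      have hb := rhoStar_key p hp a₁ b₁ h1prim ν₁ s hν₁ (by omega)
      rw [hsub] at hb
      refine le_trans (Finset.card_le_card ?_) hb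
      intro x hx
      simp only [Finset.mem_filter] at hx ⊢
      exact ⟨hx.1, hx.2.1, hx.2.2.2.2⟩
    · -- use L₂ at level ν₂
      have hν₂ : 1 ≤ ν₂ := by
        rcases Nat.eq_zero_or_pos ν₂ with h0 | h0
        · exfalso; omega
        · exact h0
      have hsub : s - ν₂ = ν₃ + m := by omega
      have hb := rhoStar_key p hp a₂ b₂ h2prim ν₂ s hν₂ (by omega)
      rw [hsub] at hb
      refine le_trans (Finset.card_le_card ?_) hb
      intro x hx
      simp only [Finset.mem_filter] at hx ⊢
      exact ⟨hx.1, hx.2.2.1, hx.2.2.2.2⟩
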